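/- arXiv:1201.4357 — 8 statements merged into one kernel-verified Lean document; each statement's English description precedes it below -/
import Mathlib

section
/- Let M be an artinian monomial ideal in K[x_1,...,x_m] and define the rank of a monomial x^b as one less than the minimum degree of a monomial x^a such that x^b lies in the principal ideal (x^a) but not in x^a·M. Then rank(x^b) equals min over socle monomials x^c of M of degree^+(b−c) minus 1, where degree^+(u) = sum of the positive coordinates of u, and the socle monomials are the monomials x^c not in M such that x_i·x^c ∈ M for all i. -/
open Finset

/-- A set of exponent vectors is a monomial ideal iff it is upward closed. -/
def UpClosed {m : ℕ} (M : Set (Fin m → ℕ)) : Prop :=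
  ∀ u ∈ M, ∀ v : Fin m → ℕ, (∀ i, u i ≤ v i) → v ∈ M

/-- Artinian: a power of each variable lies in `M`. -/
def ArtinianMono {m : ℕ} (M : Set (Fin m → ℕ)) : Prop :=
  ∀ i : Fin m, ∃ k : ℕ, (fun j => if j = i then k else 0) ∈ M

/-- Socle monomials: `x^c ∉ M` with `x_i·x^c ∈ M` for all `i`. -/
def MonSoc {m : ℕ} (M : Set (Fin m → ℕ)) : Set (Fin m → ℕ) :=
  {c | c ∉ M ∧ ∀ i : Fin m, (fun j => c j + if j = i then 1 else 0) ∈ M}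

/-- `degree⁺(u)`: the sum of the positive coordinates of `u`. -/
def degP {m : ℕ} (w : Fin m → ℤ) : ℤ := ∑ i, max (w i) 0

/-- total degree -/
def degZ {m : ℕ} (w : Fin m → ℤ) : ℤ := ∑ i, w i

def zvec {m : ℕ} (b : Fin m → ℕ) : Fin m → ℤ := fun i => (b i : ℤ)

/-- rank of a Laurent monomial `x^b` with respect to `M`. -/
noncomputable def rnk {m : ℕ} (M : Set (Fin m → ℕ)) (b : Fin m → ℤ) : ℤ :=
  sInf ((fun c => degP (b - zvec c)) '' MonSoc M) - 1

/-- `M` is level of genus `g`: all socle monomials have degree `g - 1`. -/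
def LevelOf {m : ℕ} (M : Set (Fin m → ℕ)) (g : ℤ) : Prop :=
  ∀ c ∈ MonSoc M, degZ (zvec c) = g - 1

/-- Reflection invariance with canonical monomial `x^K`. -/
def ReflInv {m : ℕ} (M : Set (Fin m → ℕ)) (K : Fin m → ℕ) : Prop :=
  ∀ c ∈ MonSoc M, (∀ i, c i ≤ K i) ∧ (fun i => K i - c i) ∈ MonSoc M

lemma exists_socle_ge {m : ℕ} (M : Set (Fin m → ℕ)) (hup : UpClosed M) (hart : ArtinianMono M)
    (d : Fin m → ℕ) (hd : d ∉ M) : ∃ c ∈ MonSoc M, ∀ i, d i ≤ c i := by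
  choose k hk using hart
  set N := ∑ i, k i with hN
  have bound : ∀ u : Fin m → ℕ, u ∉ M → ∀ i, u i < k i := by
    intro u hu i
    by_contra h
    push_neg at h
    exact hu (hup _ (hk i) u (fun j => by by_cases hji : j = i <;> simp [hji, h]))
  have aux : ∀ n : ℕ, ∀ d : Fin m → ℕ, d ∉ M → N ≤ n + ∑ i, d i →
      ∃ c ∈ MonSoc M, ∀ i, d i ≤ c i := by
    intro n
    induction n with
    | zero =>
      intro d hd hle
      by_cases h : ∀ i, (fun j => d j + if j = i then 1 else 0) ∈ M
      · exact ⟨d, ⟨hd, h⟩, fun i => le_refl _⟩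
      · push_neg at h
        obtain ⟨i, hi⟩ := h
        exfalso
        have h1 : ∀ j, d j < k j := bound d hd
        have h2 : ∑ j, d j < ∑ j, k j :=
          Finset.sum_lt_sum_of_nonempty ⟨i, Finset.mem_univ i⟩ (fun j _ => h1 j)
        omega
    | succ n ih =>
      intro d hd hle
      by_cases h : ∀ i, (fun j => d j + if j = i then 1 else 0) ∈ M
      · exact ⟨d, ⟨hd, h⟩, fun i => le_refl _⟩
      · push_neg at h
        obtain ⟨i, hi⟩ := h
        have hsum : ∑ j, (d j + if j = i then 1 else 0) = (∑ j, d j) + 1 := by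
          rw [Finset.sum_add_distrib, Finset.sum_ite_eq' Finset.univ i (fun _ => 1)]
          simp
        obtain ⟨c, hc, hcge⟩ := ih _ hi (by rw [hsum]; omega)
        exact ⟨c, hc, fun j => le_trans (by simp) (hcge j)⟩
  exact aux N d hd (by omega)

/-- the rank of a monomial, defined via ideal membership, equals
`min_{x^c ∈ MonSoc(M)} degree⁺(b - c) - 1`. -/
theorem stmt0 {m : ℕ} (M : Set (Fin m → ℕ)) (hup : UpClosed M) (hart : ArtinianMono M)
    (hproper : (0 : Fin m → ℕ) ∉ M) (b : Fin m → ℕ) :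
    sInf {d : ℤ | ∃ a : Fin m → ℕ, (∀ i, a i ≤ b i) ∧ (fun i => b i - a i) ∉ M ∧
        d = degZ (zvec a)} - 1
      = rnk M (zvec b) := by
  set S : Set ℤ := {d : ℤ | ∃ a : Fin m → ℕ, (∀ i, a i ≤ b i) ∧ (fun i => b i - a i) ∉ M ∧
        d = degZ (zvec a)} with hS
  set T : Set ℤ := (fun c => degP (zvec b - zvec c)) '' MonSoc M with hT
  have hSne : S.Nonempty := by
    refine ⟨degZ (zvec b), b, fun i => le_refl _, ?_, rfl⟩
    have : (fun i => b i - b i) = (0 : Fin m → ℕ) := by funext i; simp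
    rw [this]; exact hproper
  have hTne : T.Nonempty := by
    obtain ⟨c, hc, _⟩ := exists_socle_ge M hup hart 0 hproper
    exact ⟨_, c, hc, rfl⟩
  have hSbdd : BddBelow S := by
    refine ⟨0, fun s hs => ?_⟩
    obtain ⟨a, _, _, rfl⟩ := hs
    exact Finset.sum_nonneg fun i _ => Int.natCast_nonneg _
  have hTbdd : BddBelow T := by
    refine ⟨0, fun t ht => ?_⟩
    obtain ⟨c, _, rfl⟩ := ht
    exact Finset.sum_nonneg fun i _ => le_max_right _ _
  suffices h : sInf S = sInf T by rw [rnk, ← hT, h]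
  apply le_antisymm
  · apply le_csInf hTne
    rintro t ⟨c, hc, rfl⟩
    have hmem : degP (zvec b - zvec c) ∈ S := by
      refine ⟨fun i => b i - c i, fun i => Nat.sub_le _ _, ?_, ?_⟩
      · intro hmem
        exact hc.1 (hup _ hmem c fun i => by show b i - (b i - c i) ≤ c i; omega)
      · unfold degZ degP zvec
        apply Finset.sum_congr rfl
        intro i _
        simp only [Pi.sub_apply]
        omega
    exact csInf_le hSbdd hmem
  · apply le_csInf hSne
    rintro s ⟨a, hab, hnm, rfl⟩
    obtain ⟨c, hc, hcge⟩ := exists_socle_ge M hup hart _ hnm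
    refine csInf_le_of_le hTbdd ⟨c, hc, rfl⟩ ?_
    unfold degZ degP zvec
    apply Finset.sum_le_sum
    intro i _
    simp only [Pi.sub_apply]
    have := hcge i
    have := hab i
    omega
end

section
/- Let M be an artinian monomial ideal in K[x_1,...,x_m] that is level (all socle monomials have the same total degree g−1, where g is called the genus) and reflection-invariant with canonical monomial x^K (i.e., the map x^c ↦ x^K/x^c is an involution on the set of socle monomials). Extend rank to all Laurent monomials x^b, b ∈ Z^m, by rank(x^b) := min over socle monomials x^c of degree^+(b−c) − 1. Then for every b ∈ Z^m: rank(x^b) − rank(x^{K−b}) = degree(x^b) − g + 1. -/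
open Finset

lemma degP_nonneg {m : ℕ} (w : Fin m → ℤ) : 0 ≤ degP w :=
  Finset.sum_nonneg fun i _ => le_max_right _ _

lemma degP_sub_degP_neg {m : ℕ} (w : Fin m → ℤ) : degP w - degP (-w) = degZ w := by
  unfold degP degZ
  rw [← Finset.sum_sub_distrib]
  refine Finset.sum_congr rfl fun i _ => ?_
  simp only [Pi.neg_apply]
  omega

lemma monSoc_nonempty {m : ℕ} (M : Set (Fin m → ℕ)) (hup : UpClosed M)
    (hart : ArtinianMono M) (hproper : (0 : Fin m → ℕ) ∉ M) :
    (MonSoc M).Nonempty := by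
  classical
  set S : Set ℕ := {n | ∃ c, c ∉ M ∧ ∑ i, c i = n} with hS
  have hS0 : 0 ∈ S := ⟨0, hproper, by simp⟩
  choose k hk using hart
  have hbdd : BddAbove S := by
    refine ⟨∑ i, k i, ?_⟩
    rintro n ⟨c, hc, rfl⟩
    refine Finset.sum_le_sum fun i _ => ?_
    by_contra h
    push_neg at h
    exact hc (hup _ (hk i) c (fun j => by
      by_cases hj : j = i <;> simp [hj] <;> omega))
  obtain ⟨c, hc, hcs⟩ := Nat.sSup_mem ⟨0, hS0⟩ hbdd
  refine ⟨c, hc, fun i => ?_⟩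
  by_contra h
  have hmem : (∑ j, (c j + if j = i then 1 else 0)) ∈ S := ⟨_, h, rfl⟩
  have hle := le_csSup hbdd hmem
  rw [Finset.sum_add_distrib] at hle
  simp at hle
  omega

lemma sInf_image_add (A : Set ℤ) (d : ℤ) (hne : A.Nonempty) (hbdd : BddBelow A) :
    sInf ((fun t => t + d) '' A) = sInf A + d := by
  have hbdd' : BddBelow ((fun t => t + d) '' A) := by
    obtain ⟨l, hl⟩ := hbdd
    exact ⟨l + d, by rintro _ ⟨a, ha, rfl⟩; show l + d ≤ a + d; linarith [hl ha]⟩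
  refine le_antisymm (csInf_le hbdd' ⟨sInf A, Int.csInf_mem hne hbdd, rfl⟩) ?_
  refine le_csInf (hne.image _) ?_
  rintro _ ⟨a, ha, rfl⟩
  show sInf A + d ≤ a + d
  linarith [csInf_le hbdd ha]

/-- Riemann-Roch for artinian, level, reflection-invariant monomial ideals. -/
theorem stmt1 {m : ℕ} (M : Set (Fin m → ℕ)) (g : ℤ) (K : Fin m → ℕ)
    (hup : UpClosed M) (hart : ArtinianMono M) (hproper : (0 : Fin m → ℕ) ∉ M)
    (hlev : LevelOf M g) (hrefl : ReflInv M K) (b : Fin m → ℤ) :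
    rnk M b - rnk M (zvec K - b) = degZ b - g + 1 := by
  classical
  obtain ⟨c₀, hc₀⟩ := monSoc_nonempty M hup hart hproper
  set d : ℤ := (g - 1) - degZ b with hd
  have key : ∀ c ∈ MonSoc M,
      degP ((zvec K - b) - zvec (fun i => K i - c i)) = degP (b - zvec c) + d := by
    intro c hc
    have hle := (hrefl c hc).1
    have hveq : (zvec K - b) - zvec (fun i => K i - c i) = -(b - zvec c) := by
      funext i
      simp only [Pi.sub_apply, Pi.neg_apply, zvec]
      rw [Nat.cast_sub (hle i)]
      ring
    rw [hveq]
    have h2 := degP_sub_degP_neg (b - zvec c)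
    have h3 := hlev c hc
    have hdz : degZ (b - zvec c) = degZ b - (g - 1) := by
      unfold degZ at h3 ⊢
      simp only [Pi.sub_apply]
      rw [Finset.sum_sub_distrib]
      omega
    omega
  unfold rnk
  set A : Set ℤ := ((fun c => degP (b - zvec c)) '' MonSoc M) with hA
  have hAne : A.Nonempty := ⟨_, ⟨c₀, hc₀, rfl⟩⟩
  have hAbdd : BddBelow A := ⟨0, by rintro _ ⟨c, _, rfl⟩; exact degP_nonneg _⟩
  have hBA : ((fun c => degP ((zvec K - b) - zvec c)) '' MonSoc M) = (fun t => t + d) '' A := by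
    ext t
    constructor
    · rintro ⟨c, hc, rfl⟩
      have hc' := (hrefl c hc).2
      refine ⟨degP (b - zvec (fun i => K i - c i)), ⟨_, hc', rfl⟩, ?_⟩
      have hk := key _ hc'
      have hcc : (fun i => K i - (K i - c i)) = c := by
        funext i; exact Nat.sub_sub_self ((hrefl c hc).1 i)
      rw [hcc] at hk
      exact hk.symm
    · rintro ⟨_, ⟨c, hc, rfl⟩, rfl⟩
      exact ⟨(fun i => K i - c i), (hrefl c hc).2, key c hc⟩
  rw [hBA, sInf_image_add A d hAne hAbdd]
  omega
end

section
/- Let M be an artinian monomial ideal in K[x_1,...,x_m] and let x^a, x^b be monomials with rank(x^a) ≥ 0 and rank(x^b) ≥ 0 (equivalently x^a, x^b ∈ M). Then rank(x^a · x^b) ≥ rank(x^a) + rank(x^b). -/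
open Finset

lemma exists_soc_ge {m : ℕ} (M : Set (Fin m → ℕ)) (hup : UpClosed M)
    (hart : ArtinianMono M) (v : Fin m → ℕ) (hv : v ∉ M) :
    ∃ c ∈ MonSoc M, ∀ i, v i ≤ c i := by
  classical
  choose k hk using hart
  have hlt : ∀ w : Fin m → ℕ, w ∉ M → ∀ i, w i < k i := by
    intro w hw i
    by_contra h
    push_neg at h
    exact hw (hup _ (hk i) w (fun j => by by_cases hj : j = i <;> simp [hj]; omega))
  suffices H : ∀ n (w : Fin m → ℕ), w ∉ M → (∀ i, v i ≤ w i) →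
      (∑ i, (k i - w i)) ≤ n → ∃ c ∈ MonSoc M, ∀ i, v i ≤ c i from
    H (∑ i, (k i - v i)) v hv (fun i => le_rfl) le_rfl
  intro n
  induction n with
  | zero =>
    intro w hw hvw hsum
    refine ⟨w, ⟨hw, fun i => ?_⟩, hvw⟩
    exfalso
    have h1 : 1 ≤ k i - w i := by have := hlt w hw i; omega
    have h2 : k i - w i ≤ ∑ j, (k j - w j) :=
      Finset.single_le_sum (f := fun j => k j - w j) (fun j _ => Nat.zero_le _)
        (Finset.mem_univ i)
    omega
  | succ n ih =>
    intro w hw hvw hsum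
    by_cases hsoc : w ∈ MonSoc M
    · exact ⟨w, hsoc, hvw⟩
    · simp only [MonSoc, Set.mem_setOf_eq, not_and, not_forall] at hsoc
      obtain ⟨i, hi⟩ := hsoc hw
      refine ih (fun j => w j + if j = i then 1 else 0) hi
        (fun j => le_trans (hvw j) (Nat.le_add_right _ _)) ?_
      have hki : w i < k i := hlt w hw i
      have key : ∑ j, (k j - (w j + if j = i then 1 else 0)) + 1 = ∑ j, (k j - w j) := by
        rw [Finset.sum_eq_add_sum_sdiff_singleton_of_mem (Finset.mem_univ i)
              (fun j => k j - (w j + if j = i then 1 else 0)),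
            Finset.sum_eq_add_sum_sdiff_singleton_of_mem (Finset.mem_univ i) (fun j => k j - w j)]
        have heq : ∑ j ∈ Finset.univ \ {i}, (k j - (w j + if j = i then 1 else 0))
            = ∑ j ∈ Finset.univ \ {i}, (k j - w j) := by
          apply Finset.sum_congr rfl
          intro j hj
          simp only [Finset.mem_sdiff, Finset.mem_singleton] at hj
          simp [hj.2]
        rw [heq]
        have hii : (if i = i then 1 else 0) = 1 := if_pos rfl
        rw [hii]
        omega
      show ∑ j, (k j - (w j + if j = i then 1 else 0)) ≤ n
      omega

lemma inf_le_aux {m : ℕ} (M : Set (Fin m → ℕ)) (hup : UpClosed M) (hart : ArtinianMono M)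
    (w u : Fin m → ℕ) (hu : ∀ i, u i ≤ w i) (hnm : (fun i => w i - u i) ∉ M) :
    sInf ((fun c => degP (zvec w - zvec c)) '' MonSoc M) ≤ ∑ i, (u i : ℤ) := by
  obtain ⟨c, hc, hcg⟩ := exists_soc_ge M hup hart _ hnm
  have hle : degP (zvec w - zvec c) ≤ ∑ i, (u i : ℤ) := by
    unfold degP zvec
    apply Finset.sum_le_sum
    intro i _
    have h1 : w i - u i ≤ c i := hcg i
    have h2 := hu i
    rw [max_le_iff]
    refine ⟨?_, by positivity⟩
    simp only [Pi.sub_apply]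
    omega
  refine le_trans (csInf_le ⟨0, fun x hx => ?_⟩ ⟨c, hc, rfl⟩) hle
  obtain ⟨d, -, rfl⟩ := hx
  exact degP_nonneg _


/-- superadditivity of rank for monomials of non-negative rank. -/
theorem stmt5 {m : ℕ} (M : Set (Fin m → ℕ))
    (hup : UpClosed M) (hart : ArtinianMono M) (hproper : (0 : Fin m → ℕ) ∉ M)
    (a b : Fin m → ℕ) (ha : 0 ≤ rnk M (zvec a)) (hb : 0 ≤ rnk M (zvec b)) :
    rnk M (zvec a) + rnk M (zvec b) ≤ rnk M (zvec (a + b)) := by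
  classical
  obtain ⟨c0, hc0, -⟩ := exists_soc_ge M hup hart 0 hproper
  have key : sInf ((fun c => degP (zvec a - zvec c)) '' MonSoc M)
      + sInf ((fun c => degP (zvec b - zvec c)) '' MonSoc M)
      ≤ sInf ((fun c => degP (zvec (a + b) - zvec c)) '' MonSoc M) := by
    refine le_csInf ⟨_, ⟨c0, hc0, rfl⟩⟩ ?_
    rintro x ⟨c, hc, rfl⟩
    set U : Fin m → ℕ := fun i => a i + b i - c i with hU
    set u1 : Fin m → ℕ := fun i => min (U i) (a i) with hu1d
    set u2 : Fin m → ℕ := fun i => U i - u1 i with hu2d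
    have hu1 : ∀ i, u1 i ≤ a i := fun i => min_le_right _ _
    have hu2 : ∀ i, u2 i ≤ b i := fun i => by simp only [hu2d, hu1d, hU]; omega
    have hle1 : ∀ i, a i - u1 i ≤ c i := fun i => by simp only [hu1d, hU]; omega
    have hle2 : ∀ i, b i - u2 i ≤ c i := fun i => by simp only [hu2d, hu1d, hU]; omega
    have hna : (fun i => a i - u1 i) ∉ M := fun h => hc.1 (hup _ h c hle1)
    have hnb : (fun i => b i - u2 i) ∉ M := fun h => hc.1 (hup _ h c hle2)
    have h1 := inf_le_aux M hup hart a u1 hu1 hna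
    have h2 := inf_le_aux M hup hart b u2 hu2 hnb
    have hsum : (∑ i, (u1 i : ℤ)) + ∑ i, (u2 i : ℤ) = degP (zvec (a + b) - zvec c) := by
      rw [← Finset.sum_add_distrib]
      unfold degP zvec
      apply Finset.sum_congr rfl
      intro i _
      rw [← Int.toNat_eq_max]
      simp only [Pi.sub_apply, Pi.add_apply, hu2d, hu1d, hU]
      push_cast
      omega
    linarith [add_le_add h1 h2, hsum.le, hsum.ge]
  unfold rnk
  linarith [key]
end

section
/- Let M be a Riemann-Roch monomial ideal of genus g with canonical monomial x^K. If x^b is a monomial dividing x^K such that rank(x^b) ≥ 0 and rank(x^K/x^b) ≥ 0, then rank(x^b) ≤ (degree(x^b) − 1)/2. -/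
open Finset

/-- Clifford's theorem for Riemann-Roch monomial ideals. -/
theorem stmt6 {m : ℕ} (M : Set (Fin m → ℕ)) (g : ℤ) (K : Fin m → ℕ)
    (hup : UpClosed M) (hart : ArtinianMono M) (hproper : (0 : Fin m → ℕ) ∉ M)
    (hlev : LevelOf M g) (hrefl : ReflInv M K)
    (b : Fin m → ℕ) (hdvd : ∀ i, b i ≤ K i)
    (hb : 0 ≤ rnk M (zvec b)) (hKb : 0 ≤ rnk M (zvec K - zvec b)) :
    rnk M (zvec b) ≤ (degZ (zvec b) - 1) / 2 := by
  classical
  set S : Set ℤ := ((fun c => degP (zvec b - zvec c)) '' MonSoc M) with hS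
  have hbdd : BddBelow S := by
    refine ⟨0, ?_⟩
    rintro x ⟨c, hc, rfl⟩
    exact Finset.sum_nonneg fun i _ => le_max_right _ _
  have hne : S.Nonempty := by
    by_contra h
    rw [Set.not_nonempty_iff_eq_empty] at h
    have : rnk M (zvec b) = -1 := by
      rw [rnk, ← hS, h, Int.csInf_empty]
      norm_num
    omega
  obtain ⟨c₀, hc₀, hval⟩ := Int.csInf_mem hne hbdd
  obtain ⟨hcK, hrc⟩ := hrefl c₀ hc₀
  have hmem2 : degP (zvec b - zvec (fun i => K i - c₀ i)) ∈ S := ⟨_, hrc, rfl⟩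
  have h2 : sInf S ≤ degP (zvec b - zvec (fun i => K i - c₀ i)) := csInf_le hbdd hmem2
  have key : degP (zvec b - zvec (fun i => K i - c₀ i)) + degP (zvec b - zvec c₀)
      ≤ degZ (zvec b) := by
    rw [degP, degP, degZ, ← Finset.sum_add_distrib]
    refine Finset.sum_le_sum fun i _ => ?_
    have hb1 : (b i : ℤ) ≤ (K i : ℤ) := by exact_mod_cast hdvd i
    have hc1 : (c₀ i : ℤ) ≤ (K i : ℤ) := by exact_mod_cast hcK i
    have hc2 : ((K i - c₀ i : ℕ) : ℤ) = (K i : ℤ) - (c₀ i : ℤ) := by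
      have := hcK i; push_cast [Nat.cast_sub this]; ring
    simp only [Pi.sub_apply, zvec, hc2]
    have hb0 : (0:ℤ) ≤ (b i : ℤ) := Int.ofNat_nonneg _
    have hc0 : (0:ℤ) ≤ (c₀ i : ℤ) := Int.ofNat_nonneg _
    omega
  have hval' : degP (zvec b - zvec c₀) = sInf S := hval
  have h3 : 2 * sInf S ≤ degZ (zvec b) := by omega
  rw [rnk, ← hS]
  omega
end

section
/- Fix x^K a monomial of degree 2g−2 and let 𝓜 be a nonempty set of monomials of degree g−1 each dividing x^K. Let S = 𝓜 ∪ {x^K/x^b : x^b ∈ 𝓜}, and let M be the intersection over x^c ∈ S of the irreducible monomial ideals ⟨x_1^{c_1+1},...,x_m^{c_m+1}⟩. Then M is an artinian monomial ideal whose socle monomials are exactly the elements of S, and M is level of genus g and reflection-invariant with canonical monomial x^K. -/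
open Finset

lemma eq_of_le_of_degZ_eq {m : ℕ} {a b : Fin m → ℕ} (h : ∀ i, a i ≤ b i)
    (hd : degZ (zvec a) = degZ (zvec b)) : a = b := by
  funext i
  by_contra hne
  have hlt : a i < b i := lt_of_le_of_ne (h i) hne
  have : degZ (zvec a) < degZ (zvec b) := by
    unfold degZ zvec
    apply Finset.sum_lt_sum (fun j _ => by exact_mod_cast h j)
    exact ⟨i, Finset.mem_univ i, by exact_mod_cast hlt⟩
  omega


/-- construction of all Riemann-Roch monomial ideals of genus `g`:
intersecting the irreducible ideals `⟨x_1^{c_1+1},…,x_m^{c_m+1}⟩` for `c` in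
`𝓜 ∪ (K - 𝓜)` yields an artinian, level, reflection-invariant monomial ideal with
socle exactly `𝓜 ∪ (K - 𝓜)`. -/
theorem stmt7 {m : ℕ} (hm : 0 < m) (g : ℤ) (hg : 1 ≤ g) (K : Fin m → ℕ)
    (hK : degZ (zvec K) = 2 * g - 2)
    (𝓜 : Set (Fin m → ℕ)) (hne : 𝓜.Nonempty)
    (h𝓜 : ∀ b ∈ 𝓜, degZ (zvec b) = g - 1 ∧ ∀ i, b i ≤ K i) :
    UpClosed {w : Fin m → ℕ | ∀ c ∈ 𝓜 ∪ ((fun b => fun i => K i - b i) '' 𝓜), ∃ i, c i < w i} ∧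
    ArtinianMono {w : Fin m → ℕ | ∀ c ∈ 𝓜 ∪ ((fun b => fun i => K i - b i) '' 𝓜), ∃ i, c i < w i} ∧
    MonSoc {w : Fin m → ℕ | ∀ c ∈ 𝓜 ∪ ((fun b => fun i => K i - b i) '' 𝓜), ∃ i, c i < w i}
      = 𝓜 ∪ ((fun b => fun i => K i - b i) '' 𝓜) ∧
    LevelOf {w : Fin m → ℕ | ∀ c ∈ 𝓜 ∪ ((fun b => fun i => K i - b i) '' 𝓜), ∃ i, c i < w i} g ∧
    ReflInv {w : Fin m → ℕ | ∀ c ∈ 𝓜 ∪ ((fun b => fun i => K i - b i) '' 𝓜), ∃ i, c i < w i} K := by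
  set S : Set (Fin m → ℕ) := 𝓜 ∪ ((fun b => fun i => K i - b i) '' 𝓜) with hS
  set M : Set (Fin m → ℕ) := {w : Fin m → ℕ | ∀ c ∈ S, ∃ i, c i < w i} with hM
  -- basic facts about elements of S
  have hSprop : ∀ c ∈ S, degZ (zvec c) = g - 1 ∧ ∀ i, c i ≤ K i := by
    rintro c (hc | ⟨b, hb, rfl⟩)
    · exact h𝓜 c hc
    · obtain ⟨hd, hle⟩ := h𝓜 b hb
      have hcast : ∀ i, ((K i - b i : ℕ) : ℤ) = (K i : ℤ) - (b i : ℤ) := fun i =>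
        Int.ofNat_sub (hle i)
      refine ⟨?_, fun i => Nat.sub_le _ _⟩
      have : degZ (zvec (fun i => K i - b i)) = degZ (zvec K) - degZ (zvec b) := by
        unfold degZ zvec
        rw [← Finset.sum_sub_distrib]
        exact Finset.sum_congr rfl fun i _ => hcast i
      rw [this, hK, hd]; ring
  -- S ⊆ MonSoc M
  have hSsub : S ⊆ MonSoc M := by
    intro c hc
    constructor
    · intro hcM
      obtain ⟨i, hi⟩ := hcM c hc
      omega
    · intro i c' hc'
      by_contra hcon
      push_neg at hcon
      have hle : ∀ j, c j ≤ c' j := fun j => by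
        have := hcon j; split_ifs at this <;> omega
      have heq : c = c' := eq_of_le_of_degZ_eq hle (by rw [(hSprop c hc).1, (hSprop c' hc').1])
      have h2 := hcon i
      rw [heq] at h2
      simp at h2
  have hSoc : MonSoc M = S := by
    apply Set.Subset.antisymm _ hSsub
    rintro c ⟨hcM, hsoc⟩
    simp only [hM, Set.mem_setOf_eq] at hcM
    push_neg at hcM
    obtain ⟨c', hc', hle⟩ := hcM
    have heq : c = c' := by
      funext i
      by_contra hne
      have hi : c i < c' i := lt_of_le_of_ne (hle i) hne
      obtain ⟨j, hj⟩ := hsoc i c' hc'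
      have hlj := hle j
      simp only [] at hj
      rcases eq_or_ne j i with rfl | h
      · simp at hj; omega
      · simp [h] at hj; omega
    exact heq ▸ hc'
  refine ⟨?_, ?_, hSoc, ?_, ?_⟩
  · intro u hu v hv
    intro c hc
    obtain ⟨i, hi⟩ := hu c hc
    exact ⟨i, lt_of_lt_of_le hi (hv i)⟩
  · intro i
    refine ⟨K i + 1, fun c hc => ⟨i, ?_⟩⟩
    have := (hSprop c hc).2 i
    simp; omega
  · intro c hc
    rw [hSoc] at hc
    exact (hSprop c hc).1
  · intro c hc
    rw [hSoc] at hc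
    refine ⟨(hSprop c hc).2, ?_⟩
    apply hSsub
    rcases hc with h | ⟨b, hb, rfl⟩
    · exact Or.inr ⟨c, h, rfl⟩
    · have hle := (h𝓜 b hb).2
      have : (fun i => K i - (K i - b i)) = b := by
        funext i; have := hle i; omega
      rw [this]
      exact Or.inl hb
end

section
/- Let G be a saturated connected loopless multigraph on n nodes (u_{ij} > 0 for all i ≠ j). For each complete flag 𝒯 : ∅ ⊂ T_1 ⊂ T_2 ⊂ ... ⊂ T_{n−1} = [n−1] of subsets of [n−1] (each inclusion adding one element), define s_𝒯 = lcm(x^{T_1→T̄_1},...,x^{T_{n−1}→T̄_{n−1}}) / (x_1 x_2 ··· x_{n−1}), where T̄_i = [n] \ T_i and x^{I→J} = Π_{i∈I} x_i^{Σ_{k∈J} u_{ik}}. Then every s_𝒯 has total degree e − n + 1, where e = Σ_{i<j} u_{ij} is the total number of edges of G. -/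
open Finset

/-- The exponent vector of the socle monomial `s_𝒯` attached to a complete flag `T`:
`s_𝒯 = lcm(x^{T_1→T̄_1},…,x^{T_{n-1}→T̄_{n-1}}) / (x_1⋯x_{n-1})`.  The exponent of `x_v`
in `x^{T→T̄}` is `Σ_{k∈T̄} u_{vk}` if `v ∈ T` and `0` otherwise. -/
def socExp (m : ℕ) (u : Fin (m + 1) → Fin (m + 1) → ℕ)
    (T : Fin (m + 1) → Finset (Fin (m + 1))) (v : Fin (m + 1)) : ℕ :=
  (Finset.univ.sup fun i : Fin (m + 1) => if v ∈ T i then ∑ k ∈ (T i)ᶜ, u v k else 0) - 1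

/-- for a saturated graph, the socle monomial `s_𝒯` of every complete flag
`𝒯` of subsets of `[n-1]` has total degree `e - n + 1` (here `n = m+1`). -/
theorem stmt11 (m : ℕ) (hm : 0 < m) (u : Fin (m + 1) → Fin (m + 1) → ℕ)
    (hsym : ∀ i j, u i j = u j i) (hdiag : ∀ i, u i i = 0)
    (hsat : ∀ i j, i ≠ j → 0 < u i j)
    (T : Fin (m + 1) → Finset (Fin (m + 1)))
    (hmono : ∀ i j : Fin (m + 1), i ≤ j → T i ⊆ T j)
    (hcard : ∀ i : Fin (m + 1), (T i).card = i)
    (hlast : ∀ i, Fin.last m ∉ T i) :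
    (∑ v, (socExp m u T v : ℤ))
      = (∑ i, ∑ j, if i < j then (u i j : ℤ) else 0) - (m + 1) + 1 := by
  classical
  set L := Fin.last m with hLdef
  have hT0 : T 0 = ∅ := by
    have h := hcard 0
    simpa using Finset.card_eq_zero.mp (by simpa using h)
  have hTm : ∀ v : Fin (m+1), v ≠ L → v ∈ T L := by
    intro v hv
    have h1 : T L ⊆ ({L} : Finset _)ᶜ := by
      intro x hx
      simp only [mem_compl, mem_singleton]
      rintro rfl
      exact hlast _ hx
    have hc : (({L} : Finset (Fin (m+1)))ᶜ).card = m := by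
      simp [Finset.card_compl]
    have h2 : T L = ({L} : Finset _)ᶜ := by
      apply Finset.eq_of_subset_of_card_le h1
      rw [hc, hcard]
      simp [hLdef]
    rw [h2]
    simpa using hv
  have hex : ∀ v : Fin (m+1), v ≠ L → ∃ iv : Fin (m+1), ∀ j, v ∈ T j ↔ iv ≤ j := by
    intro v hv
    have hne : (univ.filter (fun i => v ∈ T i)).Nonempty :=
      ⟨L, by simp [hTm v hv]⟩
    refine ⟨(univ.filter (fun i => v ∈ T i)).min' hne, fun j => ?_⟩
    constructor
    · intro hj
      exact Finset.min'_le _ _ (by simp [hj])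
    · intro hj
      have h := Finset.min'_mem _ hne
      simp only [mem_filter] at h
      exact hmono _ _ hj h.2
  choose! ι hι using hex
  have hinj : ∀ v w : Fin (m+1), v ≠ L → w ≠ L → v ≠ w → ι v ≠ ι w := by
    intro v w hv hw hvw heq
    set i := ι v with hi
    have hvi : v ∈ T i := (hι v hv i).mpr le_rfl
    have hwi : w ∈ T i := (hι w hw i).mpr (le_of_eq heq.symm)
    have hi0 : (i : ℕ) ≠ 0 := by
      intro h0
      have : i = 0 := Fin.ext (by simpa using h0)
      rw [this, hT0] at hvi
      exact absurd hvi (Finset.notMem_empty v)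
    set p : Fin (m+1) := ⟨(i:ℕ) - 1, lt_of_le_of_lt (Nat.sub_le _ _) i.isLt⟩ with hp
    have hpi : p ≤ i := by
      simp only [Fin.le_def, hp]
      exact Nat.sub_le _ _
    have hplt : p < i := by
      simp only [Fin.lt_def, hp]
      omega
    have hvp : v ∉ T p := fun h => absurd ((hι v hv p).mp h) (not_le.mpr hplt)
    have hwp : w ∉ T p := fun h => absurd ((hι w hw p).mp h)
      (by rw [← heq]; exact not_le.mpr hplt)
    have hsub : T p ⊆ T i := hmono _ _ hpi
    have hcard1 : (T i \ T p).card = 1 := by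
      rw [Finset.card_sdiff_of_subset hsub, hcard, hcard]
      simp only [hp]
      omega
    obtain ⟨a, ha⟩ := Finset.card_eq_one.mp hcard1
    have hva : v = a := by
      have h : v ∈ T i \ T p := Finset.mem_sdiff.mpr ⟨hvi, hvp⟩
      rw [ha] at h; simpa using h
    have hwa : w = a := by
      have h : w ∈ T i \ T p := Finset.mem_sdiff.mpr ⟨hwi, hwp⟩
      rw [ha] at h; simpa using h
    exact hvw (hva.trans hwa.symm)
  have hsup : ∀ v, v ≠ L →
      (univ.sup fun i : Fin (m+1) => if v ∈ T i then ∑ k ∈ (T i)ᶜ, u v k else 0)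
        = ∑ k ∈ (T (ι v))ᶜ, u v k := by
    intro v hv
    apply le_antisymm
    · apply Finset.sup_le
      intro i _
      split_ifs with h
      · apply Finset.sum_le_sum_of_subset
        exact Finset.compl_subset_compl.mpr (hmono _ _ ((hι v hv i).mp h))
      · exact Nat.zero_le _
    · have h := Finset.le_sup
        (f := fun i : Fin (m+1) => if v ∈ T i then ∑ k ∈ (T i)ᶜ, u v k else 0)
        (mem_univ (ι v))
      simpa [(hι v hv (ι v)).mpr le_rfl] using h
  have hone : ∀ v, v ≠ L → 1 ≤ ∑ k ∈ (T (ι v))ᶜ, u v k := by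
    intro v hv
    have hLmem : L ∈ (T (ι v))ᶜ := by simp [hlast]
    calc 1 ≤ u v L := hsat v L hv
    _ ≤ ∑ k ∈ (T (ι v))ᶜ, u v k := Finset.single_le_sum (fun k _ => Nat.zero_le _) hLmem
  have hsocL : socExp m u T L = 0 := by
    unfold socExp
    have h : (univ.sup fun i : Fin (m+1) => if L ∈ T i then ∑ k ∈ (T i)ᶜ, u L k else 0) = 0 := by
      apply Nat.le_zero.mp
      apply Finset.sup_le
      intro i _
      simp [hlast i]
    simp [h]
  have hsoc : ∀ v, v ≠ L → (socExp m u T v : ℤ)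
      = (∑ k ∈ (T (ι v))ᶜ, (u v k : ℤ)) - 1 := by
    intro v hv
    unfold socExp
    rw [hsup v hv, Nat.cast_sub (hone v hv)]
    push_cast
    ring
  set A : ℤ := ∑ v, ∑ k, (if v ≠ L ∧ k ∉ T (ι v) then (u v k : ℤ) else 0) with hA
  have hLHS : (∑ v, (socExp m u T v : ℤ)) = A - m := by
    have h1 : ∀ v, (socExp m u T v : ℤ)
        = (∑ k, (if v ≠ L ∧ k ∉ T (ι v) then (u v k : ℤ) else 0))
          - (if v ≠ L then (1:ℤ) else 0) := by
      intro v
      by_cases hv : v = L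
      · subst hv; simp [hsocL]
      · rw [hsoc v hv, if_pos hv]
        congr 1
        rw [← Finset.sum_filter]
        congr 1
        ext k
        simp [hv]
    calc ∑ v, (socExp m u T v : ℤ)
        = ∑ v, ((∑ k, (if v ≠ L ∧ k ∉ T (ι v) then (u v k : ℤ) else 0))
          - (if v ≠ L then (1:ℤ) else 0)) := Finset.sum_congr rfl fun v _ => h1 v
      _ = A - ∑ v, (if v ≠ L then (1:ℤ) else 0) := by rw [Finset.sum_sub_distrib]
      _ = A - m := by
          congr 1
          have h2 : (univ.filter (fun v : Fin (m+1) => v ≠ L)) = ({L} : Finset _)ᶜ := by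
            ext x; simp
          rw [Finset.sum_ite, Finset.sum_const, Finset.sum_const, h2]
          simp [Finset.card_compl]
  have hA2 : A + A = ∑ v, ∑ k, (u v k : ℤ) := by
    have hswap : A = ∑ v, ∑ k, (if k ≠ L ∧ v ∉ T (ι k) then (u k v : ℤ) else 0) := by
      rw [hA]; exact Finset.sum_comm
    nth_rewrite 2 [hswap]
    rw [← Finset.sum_add_distrib]
    refine Finset.sum_congr rfl fun v _ => ?_
    rw [← Finset.sum_add_distrib]
    refine Finset.sum_congr rfl fun k _ => ?_
    by_cases hvk : v = k
    · subst hvk; simp [hdiag v]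
    · have hu : (u k v : ℤ) = u v k := by rw [hsym]
      by_cases hv : v = L
      · subst hv
        have hk : k ≠ L := fun h => hvk h.symm
        rw [if_neg (by simp), if_pos ⟨hk, hlast _⟩, hu]
        ring
      · by_cases hk : k = L
        · subst hk
          rw [if_pos ⟨hv, hlast _⟩, if_neg (by simp)]
          ring
        · have hii : ι v ≠ ι k := hinj v k hv hk hvk
          by_cases hmem : k ∈ T (ι v)
          · have h1 : ι k ≤ ι v := (hι k hk _).mp hmem
            have h2 : v ∉ T (ι k) := fun h => hii (le_antisymm ((hι v hv _).mp h) h1)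
            rw [if_neg (by simp [hmem]), if_pos ⟨hk, h2⟩, hu]
            ring
          · have h1 : ¬ ι k ≤ ι v := fun h => hmem ((hι k hk _).mpr h)
            have h2 : v ∈ T (ι k) := (hι v hv _).mpr (le_of_lt (not_le.mp h1))
            rw [if_pos ⟨hv, hmem⟩, if_neg (by simp [h2])]
            ring
  have hB2 : (∑ i, ∑ j, if i < j then (u i j : ℤ) else 0)
      + (∑ i, ∑ j, if i < j then (u i j : ℤ) else 0) = ∑ v, ∑ k, (u v k : ℤ) := by
    have hswap : (∑ i, ∑ j, if i < j then (u i j : ℤ) else 0)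
        = ∑ v, ∑ k, (if k < v then (u k v : ℤ) else 0) := Finset.sum_comm
    nth_rewrite 2 [hswap]
    rw [← Finset.sum_add_distrib]
    refine Finset.sum_congr rfl fun v _ => ?_
    rw [← Finset.sum_add_distrib]
    refine Finset.sum_congr rfl fun k _ => ?_
    rcases lt_trichotomy v k with h | h | h
    · rw [if_pos h, if_neg (not_lt.mpr h.le)]; ring
    · subst h; simp [hdiag v]
    · rw [if_neg (not_lt.mpr h.le), if_pos h]
      rw [hsym]
      ring
  have hAB : A = ∑ i, ∑ j, if i < j then (u i j : ℤ) else 0 := by linarith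
  rw [hLHS, hAB]
  push_cast
  ring
end

section
/- Let G be a saturated graph on n nodes and let 𝒯 ↦ φ(𝒯) be the involution on complete flags of [n−1] sending 𝒯 : T_1 ⊂ ... ⊂ T_{n−1} to the reverse flag T_{n−1}\T_{n−2} ⊂ T_{n−1}\T_{n−3} ⊂ ... ⊂ T_{n−1}\T_1 ⊂ T_{n−1}. Then s_{φ(𝒯)} = x^K / s_𝒯, where x^K = Π_{i=1}^{n−1} x_i^{d_i + u_{in} − 2} and d_i = Σ_{j≠i} u_{ij}. -/
open Finset

/-- The exponent vector of the canonical monomial `x^K = Π_{i=1}^{n-1} x_i^{d_i+u_{in}-2}`. -/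
def canExp (m : ℕ) (u : Fin (m + 1) → Fin (m + 1) → ℕ) (v : Fin (m + 1)) : ℕ :=
  if v = Fin.last m then 0 else (∑ k, u v k) + u v (Fin.last m) - 2

/-- for a saturated graph, the reverse flag `φ(𝒯)` with
`φ(𝒯)_j = T_{n-1} \ T_{n-1-j}` satisfies `s_{φ(𝒯)} = x^K / s_𝒯`, i.e.
`s_{φ(𝒯)} · s_𝒯 = x^K` as exponent vectors. -/
theorem stmt12 (m : ℕ) (hm : 0 < m) (u : Fin (m + 1) → Fin (m + 1) → ℕ)
    (hsym : ∀ i j, u i j = u j i) (hdiag : ∀ i, u i i = 0)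
    (hsat : ∀ i j, i ≠ j → 0 < u i j)
    (T : Fin (m + 1) → Finset (Fin (m + 1)))
    (hmono : ∀ i j : Fin (m + 1), i ≤ j → T i ⊆ T j)
    (hcard : ∀ i : Fin (m + 1), (T i).card = i)
    (hlast : ∀ i, Fin.last m ∉ T i) :
    ∀ v : Fin (m + 1),
      socExp m u (fun j => T (Fin.last m) \ T (Fin.last m - j)) v + socExp m u T v
        = canExp m u v := by
  intro v
  -- value of Fin.last m - j
  have hsubval : ∀ j : Fin (m + 1), (Fin.last m - j).val = m - j.val := by
    intro j
    rw [Fin.sub_def]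
    simp only [Fin.val_last]
    have h1 : m + 1 - j.val + m = (m + 1) + (m - j.val) := by
      have := j.isLt; omega
    rw [h1, Nat.add_mod_left, Nat.mod_eq_of_lt (by omega)]
  have hTlast : T (Fin.last m) = Finset.univ.erase (Fin.last m) := by
    apply Finset.eq_of_subset_of_card_le
    · intro k hk
      exact Finset.mem_erase.2 ⟨fun h => hlast _ (h ▸ hk), Finset.mem_univ k⟩
    · rw [hcard]
      rw [Finset.card_erase_of_mem (Finset.mem_univ _)]
      simp
  by_cases hv : v = Fin.last m
  · -- v = last : everything is zero
    subst hv
    have h0 : ∀ (S : Fin (m + 1) → Finset (Fin (m + 1))),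
        (∀ i, Fin.last m ∉ S i) → socExp m u S (Fin.last m) = 0 := by
      intro S hS
      unfold socExp
      have : (Finset.univ.sup fun i : Fin (m + 1) =>
          if Fin.last m ∈ S i then ∑ k ∈ (S i)ᶜ, u (Fin.last m) k else 0) = 0 := by
        rw [Finset.sup_congr rfl (fun i _ => if_neg (hS i))]
        simp
      rw [this]
    rw [h0 T hlast, h0 _ (fun i => by
      intro hmem
      exact hlast _ (Finset.mem_sdiff.1 hmem).1)]
    simp [canExp]
  · -- main case
    have hvlast : v ∈ T (Fin.last m) := by
      rw [hTlast]; exact Finset.mem_erase.2 ⟨hv, Finset.mem_univ v⟩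
    set A : Finset (Fin (m + 1)) := Finset.univ.filter (fun i => v ∈ T i) with hA
    have hAne : A.Nonempty := ⟨Fin.last m, by simp [hA, hvlast]⟩
    set a : Fin (m + 1) := A.min' hAne with ha_def
    have ha : v ∈ T a := (Finset.mem_filter.1 (A.min'_mem hAne)).2
    have hamin : ∀ i, v ∈ T i → a ≤ i := by
      intro i hi
      exact A.min'_le i (by simp [hA, hi])
    have ha1 : 1 ≤ a.val := by
      by_contra h
      have h0 : a = 0 := by
        apply Fin.ext
        simp only [Fin.val_zero]
        omega
      have : (T a).card = 0 := by rw [h0, hcard]; rfl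
      rw [Finset.card_eq_zero] at this
      rw [this] at ha
      exact absurd ha (Finset.notMem_empty v)
    set a' : Fin (m + 1) := ⟨a.val - 1, by have := a.isLt; omega⟩ with ha'_def
    have hva' : v ∉ T a' := by
      intro h
      have := hamin a' h
      rw [Fin.le_def] at this
      simp [ha'_def] at this
      omega
    have ha'a : a' ≤ a := by rw [Fin.le_def]; simp [ha'_def]
    have hTa : T a = insert v (T a') := by
      refine (Finset.eq_of_subset_of_card_le ?_ ?_).symm
      · intro k hk
        rcases Finset.mem_insert.1 hk with h | h
        · exact h ▸ ha
        · exact hmono _ _ ha'a h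
      · rw [Finset.card_insert_of_notMem hva', hcard, hcard]
        simp [ha'_def]
        omega
    -- the reverse-flag index
    set j' : Fin (m + 1) := ⟨m + 1 - a.val, by omega⟩ with hj'_def
    have hlj : Fin.last m - j' = a' := by
      apply Fin.ext
      rw [hsubval]
      simp [hj'_def, ha'_def]
      have := a.isLt; omega
    -- sup for the original flag
    have hsup1 : (Finset.univ.sup fun i : Fin (m + 1) =>
        if v ∈ T i then ∑ k ∈ (T i)ᶜ, u v k else 0) = ∑ k ∈ (T a)ᶜ, u v k := by
      apply le_antisymm
      · apply Finset.sup_le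
        intro i _
        split_ifs with h
        · exact Finset.sum_le_sum_of_subset
            (Finset.compl_subset_compl.2 (hmono _ _ (hamin i h)))
        · exact Nat.zero_le _
      · have := Finset.le_sup (f := fun i : Fin (m + 1) =>
          if v ∈ T i then ∑ k ∈ (T i)ᶜ, u v k else 0) (Finset.mem_univ a)
        simpa [ha] using this
    -- reverse flag
    set R : Fin (m + 1) → Finset (Fin (m + 1)) :=
      fun j => T (Fin.last m) \ T (Fin.last m - j) with hR
    have hvR : v ∈ R j' := by
      rw [hR]
      simp only [hlj]
      exact Finset.mem_sdiff.2 ⟨hvlast, hva'⟩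
    have hsup2 : (Finset.univ.sup fun j : Fin (m + 1) =>
        if v ∈ R j then ∑ k ∈ (R j)ᶜ, u v k else 0) = ∑ k ∈ (R j')ᶜ, u v k := by
      apply le_antisymm
      · apply Finset.sup_le
        intro j _
        split_ifs with h
        · apply Finset.sum_le_sum_of_subset
          apply Finset.compl_subset_compl.2
          -- R j' ⊆ R j
          have hnot : v ∉ T (Fin.last m - j) := fun hmem =>
            (Finset.mem_sdiff.1 h).2 hmem
          have hle : (Fin.last m - j) ≤ a' := by
            rw [Fin.le_def]
            simp only [ha'_def]
            by_contra hc
            push_neg at hc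
            have : a ≤ Fin.last m - j := by
              rw [Fin.le_def]; omega
            exact hnot (hmono _ _ this ha)
          rw [hR]
          simp only [hlj]
          exact Finset.sdiff_subset_sdiff (Finset.Subset.refl _) (hmono _ _ hle)
        · exact Nat.zero_le _
      · have := Finset.le_sup (f := fun j : Fin (m + 1) =>
          if v ∈ R j then ∑ k ∈ (R j)ᶜ, u v k else 0) (Finset.mem_univ j')
        simpa [hvR] using this
    -- compute (R j')ᶜ
    have hRc : (R j')ᶜ = insert (Fin.last m) (T a') := by
      rw [hR]
      simp only [hlj]
      ext k
      simp only [Finset.mem_compl, Finset.mem_sdiff, Finset.mem_insert, hTlast,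
        Finset.mem_erase, Finset.mem_univ, and_true]
      by_cases hk : k = Fin.last m
      · simp [hk]
      · by_cases hk' : k ∈ T a' <;> simp [hk, hk']
    have hS1 : ∑ k ∈ T a, u v k + ∑ k ∈ (T a)ᶜ, u v k = ∑ k, u v k :=
      Finset.sum_add_sum_compl _ _
    have hS2 : ∑ k ∈ T a, u v k = ∑ k ∈ T a', u v k := by
      rw [hTa, Finset.sum_insert hva', hdiag v, zero_add]
    have hS3 : ∑ k ∈ (R j')ᶜ, u v k = u v (Fin.last m) + ∑ k ∈ T a', u v k := by
      rw [hRc, Finset.sum_insert (hlast a')]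
    have hC1 : u v (Fin.last m) ≤ ∑ k ∈ (T a)ᶜ, u v k := by
      apply Finset.single_le_sum (fun _ _ => Nat.zero_le _)
      exact Finset.mem_compl.2 (hlast a)
    have hupos : 1 ≤ u v (Fin.last m) := hsat v (Fin.last m) hv
    have hS4 : ∑ k ∈ T a', u v k ≤ ∑ k, u v k :=
      Finset.sum_le_sum_of_subset (Finset.subset_univ _)
    unfold socExp
    rw [hsup1]
    rw [show (Finset.univ.sup fun i : Fin (m + 1) =>
        if v ∈ T (Fin.last m) \ T (Fin.last m - i) then
          ∑ k ∈ (T (Fin.last m) \ T (Fin.last m - i))ᶜ, u v k else 0)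
      = ∑ k ∈ (R j')ᶜ, u v k from hsup2]
    rw [canExp, if_neg hv, hS3]
    omega
end

section
/- Let G be a saturated graph on n nodes with e edges. Then the monomial ideal M_G ⊆ K[x_1,...,x_{n−1}] generated by the monomials x^{I→[n]\I} for all nonempty subsets I ⊆ [n−1] is artinian, level of genus e − n + 2, and reflection-invariant with canonical monomial x^K = Π_{i=1}^{n−1} x_i^{d_i + u_{in} − 2}. -/
open Finset

/-- The parking-function monomial ideal `M_G = ⟨x^{I→[n]\I} : ∅ ≠ I ⊆ [n-1]⟩`, as the set
of exponent vectors of monomials lying in it (here `n = m+1`, and the variables correspond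
to the first `m` nodes via `Fin.castSucc`). -/
def MGset (m : ℕ) (u : Fin (m + 1) → Fin (m + 1) → ℕ) : Set (Fin m → ℕ) :=
  {b | ∃ I : Finset (Fin m), I.Nonempty ∧ ∀ v : Fin m,
    (if v ∈ I then ∑ k ∈ (I.image Fin.castSucc)ᶜ, u v.castSucc k else 0) ≤ b v}

section Scratch
variable {m : ℕ} (u : Fin (m + 1) → Fin (m + 1) → ℕ)

def csig (ρ : Fin m → ℕ) (v : Fin m) : ℕ :=
  (u v.castSucc (Fin.last m) - 1) +
    ∑ w ∈ univ.filter (fun w => ρ w < ρ v), u v.castSucc w.castSucc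

lemma compl_image (I : Finset (Fin m)) :
    (I.image Fin.castSucc)ᶜ = insert (Fin.last m) (Iᶜ.image Fin.castSucc) := by
  ext k
  induction k using Fin.lastCases with
  | last =>
    simp only [mem_compl, mem_image, mem_insert, true_or, iff_true]
    rintro ⟨w, _, hw⟩
    exact (Fin.castSucc_lt_last w).ne hw
  | cast w =>
    simp only [mem_compl, mem_image, mem_insert, (Fin.castSucc_injective m).eq_iff,
      exists_eq_right]
    constructor
    · intro h; exact Or.inr h
    · rintro (h | h)
      · exact absurd h (Fin.castSucc_lt_last w).ne
      · exact h

lemma sum_over_compl (v : Fin m) (I : Finset (Fin m)) :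
    ∑ k ∈ (I.image Fin.castSucc)ᶜ, u v.castSucc k
      = u v.castSucc (Fin.last m) + ∑ w ∈ Iᶜ, u v.castSucc w.castSucc := by
  rw [compl_image, Finset.sum_insert, Finset.sum_image]
  · intro a _ b _ h; exact Fin.castSucc_injective m h
  · simp only [mem_image]
    rintro ⟨x, -, hx⟩
    exact (Fin.castSucc_lt_last x).ne hx

lemma mg_upclosed : ∀ b ∈ MGset m u, ∀ v : Fin m → ℕ, (∀ i, b i ≤ v i) → v ∈ MGset m u := by
  rintro b ⟨I, hI, h⟩ v hv
  exact ⟨I, hI, fun w => le_trans (h w) (hv w)⟩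

lemma csig_not_mem (hsat : ∀ i j, i ≠ j → 0 < u i j)
    (ρ : Fin m → ℕ) (hρ : Function.Injective ρ) :
    csig u ρ ∉ MGset m u := by
  rintro ⟨I, hI, hall⟩
  obtain ⟨v, hvI, hmin⟩ := I.exists_min_image ρ hI
  have h1 := hall v
  rw [if_pos hvI, sum_over_compl] at h1
  have hsub : univ.filter (fun w => ρ w < ρ v) ⊆ Iᶜ := by
    intro w hw
    simp only [mem_filter, mem_univ, true_and] at hw
    simp only [mem_compl]
    intro hwI
    exact absurd (hmin w hwI) (not_le.2 hw)
  have h2 : ∑ w ∈ univ.filter (fun w => ρ w < ρ v), u v.castSucc w.castSucc ≤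
      ∑ w ∈ Iᶜ, u v.castSucc w.castSucc := Finset.sum_le_sum_of_subset hsub
  have hpos : 0 < u v.castSucc (Fin.last m) := hsat _ _ (Fin.castSucc_lt_last v).ne
  simp only [csig] at h1
  omega

lemma csig_succ_mem (hsat : ∀ i j, i ≠ j → 0 < u i j)
    (ρ : Fin m → ℕ) (hρ : Function.Injective ρ) (i : Fin m) :
    (fun j => csig u ρ j + if j = i then 1 else 0) ∈ MGset m u := by
  refine ⟨univ.filter (fun w => ρ i ≤ ρ w), ⟨i, by simp⟩, ?_⟩
  intro v
  by_cases hv : v ∈ univ.filter (fun w => ρ i ≤ ρ w)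
  · rw [if_pos hv, sum_over_compl]
    have hcompl : (univ.filter (fun w => ρ i ≤ ρ w))ᶜ = univ.filter (fun w => ρ w < ρ i) := by
      ext w; simp [not_le]
    rw [hcompl]
    simp only [mem_filter, mem_univ, true_and] at hv
    have hpos : 0 < u v.castSucc (Fin.last m) := hsat _ _ (Fin.castSucc_lt_last v).ne
    by_cases hvi : v = i
    · subst hvi
      simp only [csig, if_true]
      omega
    · have hlt : ρ i < ρ v := lt_of_le_of_ne hv (fun h => hvi (hρ h.symm))
      have hisub : insert i (univ.filter (fun w => ρ w < ρ i)) ⊆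
          univ.filter (fun w => ρ w < ρ v) := by
        intro w hw
        simp only [mem_insert, mem_filter, mem_univ, true_and] at hw ⊢
        rcases hw with rfl | hw
        · exact hlt
        · exact lt_trans hw hlt
      have hni : i ∉ univ.filter (fun w => ρ w < ρ i) := by simp
      have h3 := Finset.sum_le_sum_of_subset (f := fun w => u v.castSucc w.castSucc) hisub
      rw [Finset.sum_insert hni] at h3
      beta_reduce at h3
      have hui : 0 < u v.castSucc i.castSucc :=
        hsat _ _ (fun h => hvi (Fin.castSucc_injective m h))
      simp only [if_neg hvi, csig]
      omega
  · rw [if_neg hv]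
    exact Nat.zero_le _

lemma greedy (c : Fin m → ℕ) (hc : c ∉ MGset m u) (S : Finset (Fin m)) :
    ∃ ord : Fin m → ℕ, Set.InjOn ord S ∧ (∀ v ∈ S, ord v < S.card) ∧
      ∀ v ∈ S, c v < u v.castSucc (Fin.last m) +
        ∑ w ∈ univ.filter (fun w => w ∉ S ∨ ord w < ord v), u v.castSucc w.castSucc := by
  induction S using Finset.strongInduction with
  | _ S ih =>
    rcases S.eq_empty_or_nonempty with rfl | hS
    · exact ⟨fun _ => 0, by simp [Set.InjOn], by simp, by simp⟩
    have hex : ¬ ∀ v : Fin m,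
        (if v ∈ S then ∑ k ∈ (S.image Fin.castSucc)ᶜ, u v.castSucc k else 0) ≤ c v := by
      intro h; exact hc ⟨S, hS, h⟩
    push_neg at hex
    obtain ⟨v, hv⟩ := hex
    have hvS : v ∈ S := by
      by_contra h; rw [if_neg h] at hv; omega
    rw [if_pos hvS, sum_over_compl] at hv
    obtain ⟨ord', hinj', hbd', hmain'⟩ := ih (S.erase v) (Finset.erase_ssubset hvS)
    refine ⟨fun w => if w = v then 0 else ord' w + 1, ?_, ?_, ?_⟩
    · intro x hx y hy hxy
      simp only at hxy
      by_cases hxv : x = v <;> by_cases hyv : y = v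
      · rw [hxv, hyv]
      · rw [if_pos hxv, if_neg hyv] at hxy; omega
      · rw [if_neg hxv, if_pos hyv] at hxy; omega
      · rw [if_neg hxv, if_neg hyv] at hxy
        exact hinj' (Finset.mem_erase.2 ⟨hxv, hx⟩) (Finset.mem_erase.2 ⟨hyv, hy⟩) (by omega)
    · intro w hw
      by_cases hwv : w = v
      · simp only [if_pos hwv]
        exact Finset.card_pos.2 hS
      · simp only [if_neg hwv]
        have := hbd' w (Finset.mem_erase.2 ⟨hwv, hw⟩)
        rw [Finset.card_erase_of_mem hvS] at this
        omega
    · intro x hx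
      by_cases hxv : x = v
      · subst hxv
        have hfeq : univ.filter (fun w => w ∉ S ∨
              (if w = x then 0 else ord' w + 1) < (if x = x then 0 else ord' x + 1))
            = Sᶜ := by
          ext w
          simp only [mem_filter, mem_univ, true_and, mem_compl, eq_self_iff_true, ite_true]
          constructor
          · rintro (h | h)
            · exact h
            · omega
          · intro h; exact Or.inl h
        rw [hfeq]
        convert hv using 2
      · have hx' : x ∈ S.erase v := Finset.mem_erase.2 ⟨hxv, hx⟩
        have h1 := hmain' x hx'
        have hfeq : univ.filter (fun w => w ∉ S ∨
              (if w = v then 0 else ord' w + 1) < (if x = v then 0 else ord' x + 1))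
            = univ.filter (fun w => w ∉ S.erase v ∨ ord' w < ord' x) := by
          ext w
          simp only [mem_filter, mem_univ, true_and, if_neg hxv, Finset.mem_erase]
          by_cases hwv : w = v
          · subst hwv
            simp only [eq_self_iff_true, ite_true]
            constructor
            · intro _; exact Or.inl (fun hh => hh.1 rfl)
            · intro _; exact Or.inr (by omega)
          · simp only [if_neg hwv]
            constructor
            · rintro (h | h)
              · exact Or.inl (fun hh => h hh.2)
              · exact Or.inr (by omega)
            · rintro (h | h)
              · exact Or.inl (fun hh => h ⟨hwv, hh⟩)
              · exact Or.inr (by omega)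
        rw [hfeq]
        exact h1

lemma csig_mem_soc (hsat : ∀ i j, i ≠ j → 0 < u i j)
    (ρ : Fin m → ℕ) (hρ : Function.Injective ρ) :
    csig u ρ ∈ MonSoc (MGset m u) :=
  ⟨csig_not_mem u hsat ρ hρ, csig_succ_mem u hsat ρ hρ⟩

lemma soc_char (hsat : ∀ i j, i ≠ j → 0 < u i j)
    (c : Fin m → ℕ) (hc : c ∈ MonSoc (MGset m u)) :
    ∃ ρ : Fin m → ℕ, Function.Injective ρ ∧ (∀ v, ρ v < m) ∧ c = csig u ρ := by
  obtain ⟨hcn, hcs⟩ := hc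
  obtain ⟨ord, hinj, hbd, hmain⟩ := greedy u c hcn univ
  have hinj' : Function.Injective ord := fun a b h =>
    hinj (Finset.mem_coe.2 (mem_univ a)) (Finset.mem_coe.2 (mem_univ b)) h
  have hbd' : ∀ v, ord v < m := by
    intro v
    have := hbd v (mem_univ v)
    simpa using this
  refine ⟨ord, hinj', hbd', ?_⟩
  have hle : ∀ v, c v ≤ csig u ord v := by
    intro v
    have h1 := hmain v (mem_univ v)
    have hfeq : univ.filter (fun w => w ∉ (univ : Finset (Fin m)) ∨ ord w < ord v)
        = univ.filter (fun w => ord w < ord v) := by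
      ext w; simp
    rw [hfeq] at h1
    have hpos : 0 < u v.castSucc (Fin.last m) := hsat _ _ (Fin.castSucc_lt_last v).ne
    simp only [csig]
    omega
  funext v
  by_contra hne
  have hlt : c v < csig u ord v := lt_of_le_of_ne (hle v) hne
  have hmem := hcs v
  have : csig u ord ∈ MGset m u := by
    refine mg_upclosed u _ hmem _ ?_
    intro j
    by_cases hj : j = v
    · subst hj; simp only [eq_self_iff_true, ite_true]; omega
    · simp only [if_neg hj]
      have := hle j
      omega
  exact csig_not_mem u hsat ord hinj' this

lemma split3 {M : Type*} [AddCommMonoid M] (ρ : Fin m → ℕ) (hρ : Function.Injective ρ)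
    (v : Fin m) (g : Fin m → M) :
    ∑ w, g w = (∑ w ∈ univ.filter (fun w => ρ w < ρ v), g w) +
      ((∑ w ∈ univ.filter (fun w => ρ v < ρ w), g w) + g v) := by
  have h1 : univ.filter (fun w => ¬ ρ w < ρ v) = insert v (univ.filter (fun w => ρ v < ρ w)) := by
    ext w
    simp only [mem_filter, mem_univ, true_and, mem_insert, not_lt]
    constructor
    · intro h
      rcases lt_or_eq_of_le h with h' | h'
      · exact Or.inr h'
      · exact Or.inl (hρ h'.symm)
    · rintro (rfl | h)
      · exact le_refl _
      · exact le_of_lt h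
  rw [← Finset.sum_filter_add_sum_filter_not univ (fun w => ρ w < ρ v) g, h1,
    Finset.sum_insert (by simp)]
  rw [add_comm (g v)]

lemma swap_sum {k : ℕ} (F : Fin k → Fin k → ℤ) (hF : ∀ v w, F v w = F w v)
    (ρ : Fin k → ℕ) :
    (∑ v, ∑ w, if ρ v < ρ w then F v w else 0)
      = ∑ v, ∑ w, if ρ w < ρ v then F v w else 0 := by
  rw [Finset.sum_comm]
  refine Finset.sum_congr rfl fun x _ => Finset.sum_congr rfl fun y _ => ?_
  rw [hF y x]

lemma two_mul_sum {k : ℕ} (F : Fin k → Fin k → ℤ) (hF : ∀ v w, F v w = F w v)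
    (hd : ∀ v, F v v = 0) (ρ : Fin k → ℕ) (hρ : Function.Injective ρ) :
    2 * (∑ v, ∑ w, if ρ v < ρ w then F v w else 0) = ∑ v, ∑ w, F v w := by
  rw [two_mul]
  nth_rewrite 2 [swap_sum F hF ρ]
  rw [← Finset.sum_add_distrib]
  refine Finset.sum_congr rfl fun v _ => ?_
  rw [← Finset.sum_add_distrib]
  refine Finset.sum_congr rfl fun w _ => ?_
  rcases lt_trichotomy (ρ v) (ρ w) with h | h | h
  · rw [if_pos h, if_neg (by omega), add_zero]
  · have : v = w := hρ h
    subst this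
    simp [hd v]
  · rw [if_neg (by omega), if_pos h, zero_add]

lemma csig_deg (hsym : ∀ i j, u i j = u j i) (hdiag : ∀ i, u i i = 0)
    (hsat : ∀ i j, i ≠ j → 0 < u i j)
    (ρ : Fin m → ℕ) (hρ : Function.Injective ρ) :
    ∑ v, (csig u ρ v : ℤ) = (∑ i, ∑ j, if i < j then (u i j : ℤ) else 0) - m := by
  set F : Fin m → Fin m → ℤ := fun v w => (u v.castSucc w.castSucc : ℤ) with hFdef
  have hF : ∀ v w, F v w = F w v := fun v w => by simp only [hFdef, hsym]
  have hd : ∀ v, F v v = 0 := fun v => by simp [hFdef, hdiag]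
  -- cast csig
  have hcast : ∀ v, (csig u ρ v : ℤ) = ((u v.castSucc (Fin.last m) : ℤ) - 1) +
      ∑ w, if ρ w < ρ v then F v w else 0 := by
    intro v
    rw [csig, Nat.cast_add, Nat.cast_sub (hsat _ _ (Fin.castSucc_lt_last v).ne),
      Finset.sum_filter, Nat.cast_sum]
    push_cast
    rfl
  have hA : 2 * (∑ v, ∑ w, if ρ w < ρ v then F v w else 0) = ∑ v, ∑ w, F v w := by
    rw [← swap_sum F hF ρ]
    exact two_mul_sum F hF hd ρ hρ
  -- e
  have hE : 2 * (∑ i, ∑ j, if i < j then (u i j : ℤ) else 0)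
      = ∑ i, ∑ j, (u i j : ℤ) := by
    have := two_mul_sum (fun i j => (u i j : ℤ)) (fun i j => by simp [hsym])
      (fun i => by simp [hdiag]) (fun i : Fin (m+1) => (i : ℕ)) (fun a b h => Fin.val_injective h)
    simp only [← Fin.lt_def] at this
    exact this
  -- split the big sum
  have hsplit : (∑ i, ∑ j, (u i j : ℤ))
      = (∑ v, ∑ w, F v w) + 2 * ∑ v : Fin m, (u v.castSucc (Fin.last m) : ℤ) := by
    rw [Fin.sum_univ_castSucc (f := fun i => ∑ j, (u i j : ℤ))]
    have inner : ∀ i : Fin (m+1), (∑ j, (u i j : ℤ))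
        = (∑ w : Fin m, (u i w.castSucc : ℤ)) + (u i (Fin.last m) : ℤ) := by
      intro i
      rw [Fin.sum_univ_castSucc (f := fun j => (u i j : ℤ))]
    simp only [inner]
    rw [Finset.sum_add_distrib]
    have hlast : (∑ w : Fin m, (u (Fin.last m) w.castSucc : ℤ)) = ∑ w : Fin m, (u w.castSucc (Fin.last m) : ℤ) := by
      refine Finset.sum_congr rfl fun w _ => by rw [hsym]
    rw [hlast, hdiag]
    push_cast
    ring
  have hsum : ∑ v, (csig u ρ v : ℤ) = (∑ v : Fin m, (u v.castSucc (Fin.last m) : ℤ)) - m +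
      ∑ v, ∑ w, if ρ w < ρ v then F v w else 0 := by
    simp only [hcast]
    rw [Finset.sum_add_distrib, Finset.sum_sub_distrib]
    simp [Finset.card_univ]
  linarith

lemma filter_rev (hm : 0 < m) (ρ : Fin m → ℕ) (hb : ∀ v, ρ v < m) (v : Fin m) :
    univ.filter (fun w => (m - 1 - ρ w) < (m - 1 - ρ v)) =
      univ.filter (fun w => ρ v < ρ w) := by
  ext w
  simp only [mem_filter, mem_univ, true_and]
  have h1 := hb v
  have h2 := hb w
  omega

lemma csig_add_rev (hsym : ∀ i j, u i j = u j i) (hdiag : ∀ i, u i i = 0)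
    (hsat : ∀ i j, i ≠ j → 0 < u i j) (hm : 0 < m)
    (ρ : Fin m → ℕ) (hρ : Function.Injective ρ) (hb : ∀ v, ρ v < m) (v : Fin m) :
    csig u ρ v + csig u (fun w => m - 1 - ρ w) v
      = (∑ k, u v.castSucc k) + u v.castSucc (Fin.last m) - 2 := by
  have ha : 1 ≤ u v.castSucc (Fin.last m) := hsat _ _ (Fin.castSucc_lt_last v).ne
  have hsp := split3 ρ hρ v (fun w => u v.castSucc w.castSucc)
  have hdv : u v.castSucc v.castSucc = 0 := hdiag _
  have hful : (∑ k, u v.castSucc k)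
      = (∑ w : Fin m, u v.castSucc w.castSucc) + u v.castSucc (Fin.last m) :=
    Fin.sum_univ_castSucc (f := fun k => u v.castSucc k)
  simp only [csig, filter_rev hm ρ hb v]
  omega

end Scratch

/-- for a saturated graph `G` on `n = m+1` nodes with `e` edges, the ideal
`M_G` is artinian, level of genus `e - n + 2`, and reflection-invariant with canonical
monomial `x^K = Π_{i=1}^{n-1} x_i^{d_i + u_{in} - 2}`. -/
theorem stmt13 (m : ℕ) (hm : 0 < m) (u : Fin (m + 1) → Fin (m + 1) → ℕ)
    (hsym : ∀ i j, u i j = u j i) (hdiag : ∀ i, u i i = 0)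
    (hsat : ∀ i j, i ≠ j → 0 < u i j) :
    ArtinianMono (MGset m u) ∧
    LevelOf (MGset m u)
      ((∑ i, ∑ j, if i < j then (u i j : ℤ) else 0) - (m + 1) + 2) ∧
    ReflInv (MGset m u)
      (fun v => (∑ k, u v.castSucc k) + u v.castSucc (Fin.last m) - 2) := by
  refine ⟨?_, ?_, ?_⟩
  · intro i
    refine ⟨∑ k ∈ (({i} : Finset (Fin m)).image Fin.castSucc)ᶜ, u i.castSucc k,
      {i}, Finset.singleton_nonempty i, ?_⟩
    intro v
    by_cases hv : v = i
    · subst hv; simp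
    · beta_reduce
      rw [if_neg (by simp [hv]), if_neg hv]
  · intro c hc
    obtain ⟨ρ, hρ, hb, rfl⟩ := soc_char u hsat c hc
    have hdeg := csig_deg u hsym hdiag hsat ρ hρ
    simp only [degZ, zvec]
    push_cast
    linarith
  · intro c hc
    obtain ⟨ρ, hρ, hb, rfl⟩ := soc_char u hsat c hc
    have hρ'inj : Function.Injective (fun w => m - 1 - ρ w) := by
      intro a b h
      have h1 := hb a
      have h2 := hb b
      simp only at h
      apply hρ
      omega
    have hkey := csig_add_rev u hsym hdiag hsat hm ρ hρ hb
    constructor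
    · intro i
      beta_reduce
      have := hkey i
      omega
    · have heq : (fun i => ((∑ k, u i.castSucc k) + u i.castSucc (Fin.last m) - 2)
          - csig u ρ i) = csig u (fun w => m - 1 - ρ w) := by
        funext i
        have := hkey i
        omega
      beta_reduce
      rw [heq]
      exact csig_mem_soc u hsat _ hρ'inj
end
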